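/- (Relations satisfied by the recursive basis, Lemma 4.3.) For every t ≥ 0, the set B_[2t] is closed under the exchange map (−)^e, and for every b ∈ B_[2t] the following identities hold in R: (i) Q1(b) = Q1(b^e); (ii) Q1(Q1(b)^e) = b + b^e; (iii) P(Q1(b)^e) = Q1(b); (iv) P(b) = 0 = P(b^e); (v) Q1(Q1(b·x_{2t+1})^e) = Q1(b·x_{2t+1}); (vi) P(Q1(b·x_{2t+1})) = 0; (vii) P(Q1(b·x_{2t+1})^e) = 0. -/

import Mathlib

/-!
The exterior model `R = Λ_{F₂}(t₁, t₂, …) ⊗ Λ_{F₂}(x₁, x₂, …)`, realized as the free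
`F₂`-vector space on basis monomials `t_I x_J` indexed by pairs of finite subsets
`I, J ⊆ {1, 2, …}` (modelled by `Finset ℕ+`), with the product
`t_I x_J · t_{I'} x_{J'} = t_{I∪I'} x_{J∪J'}` when `I ∩ I' = ∅ = J ∩ J'`, and `0` otherwise;
the operators `Q₁(t_I x_J) = Σ_{j∈J} t_j t_I x_{J∖j}` and
`P(t_I x_J) = Σ_{K⊆J, |K|=2} t_K t_I x_{J∖K}`; and the exchange map `(t_I x_J)ᵉ = t_J x_I`.
-/

noncomputable section

namespace Tmf

abbrev F : Type := ZMod 2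

/-- The underlying `F₂`-vector space of `R`, free on pairs of finite subsets of `ℕ+`. -/
abbrev R : Type := (Finset ℕ+ × Finset ℕ+) →₀ F

/-- The basis monomial `t_I x_J`. -/
def tx (I J : Finset ℕ+) : R := Finsupp.single (I, J) 1

/-- Product of two basis monomials. -/
def mulVal (a b : Finset ℕ+ × Finset ℕ+) : R :=
  if Disjoint a.1 b.1 ∧ Disjoint a.2 b.2 then tx (a.1 ∪ b.1) (a.2 ∪ b.2) else 0

/-- The (bilinear) multiplication of `R`. -/
def mulR : R →ₗ[F] R →ₗ[F] R :=
  Finsupp.lsum F fun a => LinearMap.id.smulRight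
    (Finsupp.lsum F fun b => LinearMap.id.smulRight (mulVal a b))

/-- `Q₁` on a basis monomial: `Q₁(t_I x_J) = Σ_{j∈J} t_j t_I x_{J∖j}`. -/
def Q1val (a : Finset ℕ+ × Finset ℕ+) : R :=
  ∑ j ∈ a.2, if j ∈ a.1 then 0 else tx (insert j a.1) (a.2.erase j)

/-- The operator `Q₁ : R → R`. -/
def Q1R : R →ₗ[F] R := Finsupp.lsum F fun a => LinearMap.id.smulRight (Q1val a)

/-- `P` on a basis monomial: `P(t_I x_J) = Σ_{K⊆J, |K|=2} t_K t_I x_{J∖K}`. -/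
def PvalR (a : Finset ℕ+ × Finset ℕ+) : R :=
  ∑ p ∈ (a.2 ×ˢ a.2).filter fun p => p.1 < p.2,
    if p.1 ∈ a.1 ∨ p.2 ∈ a.1 then 0
    else tx (insert p.1 (insert p.2 a.1)) ((a.2.erase p.1).erase p.2)

/-- The operator `P : R → R` (the `d₂`-differential of the length spectral sequence). -/
def PR : R →ₗ[F] R := Finsupp.lsum F fun a => LinearMap.id.smulRight (PvalR a)

/-- The exchange map `(t_I x_J)ᵉ = t_J x_I`. -/
def exch : R →ₗ[F] R := Finsupp.lsum F fun a => LinearMap.id.smulRight (tx a.2 a.1)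

/-- `x_n` (with `n : ℕ` positive, coerced into `ℕ+`). -/
def xg (n : ℕ) : R := tx ∅ {n.toPNat'}

/-- `t_n` (with `n : ℕ` positive, coerced into `ℕ+`). -/
def tg (n : ℕ) : R := tx {n.toPNat'} ∅

/-- `M_J ⊆ R`: the span of `{t_I x_{J∖I} : I ⊆ J}`. -/
def MJ (J : Finset ℕ+) : Submodule F R :=
  Submodule.span F {m | ∃ I ⊆ J, m = tx I (J \ I)}

/-- The sets `B_{[2t]}` of the recursive construction (Definition 4.2). -/
def B2 : ℕ → Set R
  | 0 => {tx ∅ ∅}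
  | t + 1 =>
      (fun b => mulR (Q1R (mulR b (xg (2 * t + 1)))) (xg (2 * t + 2))) '' B2 t ∪
      (fun b => mulR (exch (Q1R (mulR b (xg (2 * t + 1))))) (tg (2 * t + 2))) '' B2 t

/-- The sets `B_{[n]}` (Definition 4.2): `B_{[0]} = {1}`,
`B_{[2t+1]} = Q₁(B_{[2t]}·x_{2t+1}) ∪ (Q₁(B_{[2t]}·x_{2t+1}))ᵉ`,
`B_{[2t+2]} = Q₁(B_{[2t]}·x_{2t+1})·x_{2t+2} ∪ (Q₁(B_{[2t]}·x_{2t+1}))ᵉ·t_{2t+2}`. -/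
def BB (n : ℕ) : Set R :=
  if Even n then B2 (n / 2)
  else
    (fun b => Q1R (mulR b (xg n))) '' B2 (n / 2) ∪
    (fun b => exch (Q1R (mulR b (xg n)))) '' B2 (n / 2)

/-- `[n] = {1, …, n}` as a `Finset ℕ+`. -/
def rng (n : ℕ) : Finset ℕ+ := (Finset.range n).image fun i => (i + 1).toPNat'

/-- `B_J` for a finite `J ⊆ ℕ+`: the image of `B_{[|J|]}` under the relabeling
`t_i ↦ t_{φ(i)}`, `x_i ↦ x_{φ(i)}`, where `φ : [|J|] → J` is the order-preserving
bijection (`phiJ J`, extended by the identity to all of `ℕ+`). -/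
def phiJ (J : Finset ℕ+) (m : ℕ+) : ℕ+ :=
  if h : (m : ℕ) - 1 < J.card then (J.orderIsoOfFin rfl ⟨(m : ℕ) - 1, h⟩ : ℕ+) else m

/-- `B_J`: the relabeled copy of `B_{[|J|]}` inside `M_J`. -/
def BJ (J : Finset ℕ+) : Set R :=
  (Finsupp.lsum F fun a => LinearMap.id.smulRight
      (tx (a.1.image (phiJ J)) (a.2.image (phiJ J))) : R →ₗ[F] R) '' BB J.card


set_option linter.dupNamespace false

open Finset in
lemma addSelf (u : R) : u + u = 0 := by
  have h : (2 : F) • u = 0 := by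
    have : (2 : F) = 0 := by decide
    rw [this, zero_smul]
  simpa [two_smul] using h

lemma lsum_tx {M : Type} [AddCommMonoid M] [Module F M]
    (g : Finset ℕ+ × Finset ℕ+ → M) (I J : Finset ℕ+) :
    (Finsupp.lsum F fun a => (LinearMap.id : F →ₗ[F] F).smulRight (g a)) (tx I J) = g (I, J) := by
  simp [tx]

lemma exch_tx (I J : Finset ℕ+) : exch (tx I J) = tx J I := lsum_tx _ I J
lemma Q1_tx (I J : Finset ℕ+) : Q1R (tx I J) = Q1val (I, J) := lsum_tx _ I J
lemma P_tx (I J : Finset ℕ+) : PR (tx I J) = PvalR (I, J) := lsum_tx _ I J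
lemma mul_tx_tx (I J I' J' : Finset ℕ+) :
    mulR (tx I J) (tx I' J') = mulVal (I, J) (I', J') := by
  have h1 : mulR (tx I J) = Finsupp.lsum F fun b => LinearMap.id.smulRight (mulVal (I,J) b) :=
    lsum_tx _ I J
  rw [h1]; exact lsum_tx _ I' J'

lemma mul_tx_x (I J : Finset ℕ+) (k : ℕ+) :
    mulR (tx I J) (tx ∅ {k}) = if k ∈ J then 0 else tx I (insert k J) := by
  rw [mul_tx_tx]
  unfold mulVal
  by_cases h : k ∈ J
  · simp [h]
  · simp [h]

lemma mul_tx_t (I J : Finset ℕ+) (k : ℕ+) :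
    mulR (tx I J) (tx {k} ∅) = if k ∈ I then 0 else tx (insert k I) J := by
  rw [mul_tx_tx]
  unfold mulVal
  by_cases h : k ∈ I
  · simp [h]
  · simp [h, Finset.singleton_union]

lemma exch_exch (u : R) : exch (exch u) = u := by
  induction u using Finsupp.induction_linear with
  | zero => simp
  | add f g hf hg => simp [map_add, hf, hg]
  | single a c =>
    have h : (Finsupp.single a c : R) = c • tx a.1 a.2 := by
      simp [tx, Finsupp.smul_single]
    rw [h, map_smul, map_smul, exch_tx, exch_tx]
lemma sum_pairs_insert {M : Type} [AddCommMonoid M] (S : Finset ℕ+) (k : ℕ+) (hk : k ∉ S)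
    (f : ℕ+ × ℕ+ → M) (hsymm : ∀ a b, f (a, b) = f (b, a)) :
    ∑ p ∈ (insert k S ×ˢ insert k S).filter (fun p => p.1 < p.2), f p
      = (∑ p ∈ (S ×ˢ S).filter (fun p => p.1 < p.2), f p) + ∑ j ∈ S, f (j, k) := by
  rw [← Finset.sum_filter_add_sum_filter_not
    ((insert k S ×ˢ insert k S).filter (fun p => p.1 < p.2)) (fun p => p.1 ≠ k ∧ p.2 ≠ k)]
  congr 1
  · apply Finset.sum_congr _ (fun _ _ => rfl)
    ext p
    simp only [Finset.mem_filter, Finset.mem_product, Finset.mem_insert]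
    constructor
    · rintro ⟨⟨⟨h1 | h1, h2 | h2⟩, hlt⟩, hne1, hne2⟩ <;> tauto
    · rintro ⟨⟨h1, h2⟩, hlt⟩
      exact ⟨⟨⟨Or.inr h1, Or.inr h2⟩, hlt⟩, fun h => hk (h ▸ h1), fun h => hk (h ▸ h2)⟩
  · apply Finset.sum_nbij' (i := fun p => if p.1 = k then p.2 else p.1)
      (j := fun a => if a < k then (a, k) else (k, a))
    · intro p hp
      simp only [Finset.mem_filter, Finset.mem_product, Finset.mem_insert, not_and_or,
        not_ne_iff] at hp
      obtain ⟨⟨⟨h1, h2⟩, hlt⟩, hc⟩ := hp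
      rcases hc with hc | hc
      · subst hc
        rw [if_pos rfl]
        rcases h2 with h2 | h2
        · exact absurd (h2 ▸ hlt) (lt_irrefl _)
        · exact h2
      · subst hc
        rw [if_neg (ne_of_lt hlt)]
        rcases h1 with h1 | h1
        · exact absurd (h1 ▸ hlt) (lt_irrefl _)
        · exact h1
    · intro a ha
      by_cases h : a < k
      · rw [if_pos h]
        simp only [Finset.mem_filter, Finset.mem_product, Finset.mem_insert]
        refine ⟨⟨⟨?_, ?_⟩, h⟩, ?_⟩ <;> tauto
      · have hne : a ≠ k := fun h' => hk (h' ▸ ha)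
        have h' : k < a := lt_of_le_of_ne (not_lt.mp h) (Ne.symm hne)
        rw [if_neg h]
        simp only [Finset.mem_filter, Finset.mem_product, Finset.mem_insert]
        refine ⟨⟨⟨?_, ?_⟩, h'⟩, ?_⟩ <;> tauto
    · intro p hp
      simp only [Finset.mem_filter, Finset.mem_product, Finset.mem_insert, not_and_or,
        not_ne_iff] at hp
      obtain ⟨⟨⟨h1, h2⟩, hlt⟩, hc⟩ := hp
      rcases hc with hc | hc
      · subst hc
        simp [lt_asymm hlt]
      · subst hc
        simp [ne_of_lt hlt, hlt]
    · intro a ha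
      by_cases h : a < k
      · have hne : a ≠ k := ne_of_lt h
        simp [h, hne]
      · simp [h, ne_of_lt (lt_of_le_of_ne (not_lt.mp h) (fun h' => hk (h' ▸ ha)))]
    · intro p hp
      simp only [Finset.mem_filter, Finset.mem_product, Finset.mem_insert, not_and_or,
        not_ne_iff] at hp
      obtain ⟨⟨⟨h1, h2⟩, hlt⟩, hc⟩ := hp
      rcases hc with hc | hc
      · subst hc; rw [if_pos rfl]; exact hsymm _ _
      · subst hc; rw [if_neg (ne_of_lt hlt)]
lemma ext_tx {f g : R →ₗ[F] R} (h : ∀ I J, f (tx I J) = g (tx I J)) (u : R) : f u = g u := by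
  have hfg : f = g := Finsupp.lhom_ext fun a b => by
    have e : (Finsupp.single a b : R) = b • tx a.1 a.2 := by simp [tx, Finsupp.smul_single]
    rw [e, map_smul, map_smul, h]
  rw [hfg]

lemma Q1_mul_x (k : ℕ+) (u : R) :
    Q1R (mulR u (tx ∅ {k})) = mulR (Q1R u) (tx ∅ {k}) + mulR u (tx {k} ∅) := by
  have := ext_tx (f := Q1R ∘ₗ mulR.flip (tx ∅ {k}))
      (g := (mulR.flip (tx ∅ {k})) ∘ₗ Q1R + mulR.flip (tx {k} ∅)) ?_ u
  · simpa using this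
  intro I J
  simp only [LinearMap.comp_apply, LinearMap.flip_apply, LinearMap.add_apply]
  rw [mul_tx_x, Q1_tx]
  by_cases hk : k ∈ J
  · rw [if_pos hk, map_zero]
    unfold Q1val
    rw [map_sum, LinearMap.sum_apply]
    have hterm : ∀ j ∈ J, (mulR (if j ∈ I then 0 else tx (insert j I) (J.erase j))) (tx ∅ {k})
        = if j = k then (if k ∈ I then 0 else tx (insert k I) J) else 0 := by
      intro j hj
      by_cases hjk : j = k
      · subst hjk
        rw [if_pos rfl]
        by_cases hI : j ∈ I
        · simp [hI]
        · rw [if_neg hI, if_neg hI, mul_tx_x, if_neg (Finset.notMem_erase j J),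
            Finset.insert_erase hj]
      · rw [if_neg hjk]
        by_cases hI : j ∈ I
        · simp [hI]
        · rw [if_neg hI, mul_tx_x, if_pos (Finset.mem_erase.mpr ⟨Ne.symm hjk, hk⟩)]
    rw [Finset.sum_congr rfl hterm, Finset.sum_ite_eq' J k
      (fun _ => if k ∈ I then 0 else tx (insert k I) J), if_pos hk, mul_tx_t]
    exact (addSelf _).symm
  · rw [if_neg hk, Q1_tx]
    unfold Q1val
    dsimp only
    rw [Finset.sum_insert hk, Finset.erase_insert hk, map_sum, LinearMap.sum_apply, mul_tx_t]
    have hterm1 : ∀ j ∈ J, (if j ∈ I then 0 else tx (insert j I) ((insert k J).erase j))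
        = if j ∈ I then 0 else tx (insert j I) (insert k (J.erase j)) := by
      intro j hj
      rw [Finset.erase_insert_of_ne (by rintro rfl; exact hk hj)]
    have hterm2 : ∀ j ∈ J, (mulR (if j ∈ I then 0 else tx (insert j I) (J.erase j))) (tx ∅ {k})
        = if j ∈ I then 0 else tx (insert j I) (insert k (J.erase j)) := by
      intro j hj
      by_cases hI : j ∈ I
      · simp [hI]
      · rw [if_neg hI, if_neg hI, mul_tx_x,
          if_neg (fun h => hk (Finset.mem_of_mem_erase h))]
    rw [Finset.sum_congr rfl hterm1, Finset.sum_congr rfl hterm2, add_comm]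
lemma Q1_mul_t (k : ℕ+) (u : R) :
    Q1R (mulR u (tx {k} ∅)) = mulR (Q1R u) (tx {k} ∅) := by
  have := ext_tx (f := Q1R ∘ₗ mulR.flip (tx {k} ∅))
      (g := (mulR.flip (tx {k} ∅)) ∘ₗ Q1R) ?_ u
  · simpa using this
  intro I J
  simp only [LinearMap.comp_apply, LinearMap.flip_apply]
  rw [mul_tx_t, Q1_tx]
  unfold Q1val
  rw [map_sum, LinearMap.sum_apply]
  by_cases hk : k ∈ I
  · rw [if_pos hk, map_zero]
    symm
    apply Finset.sum_eq_zero
    intro j hj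
    by_cases hI : j ∈ I
    · simp [hI]
    · rw [if_neg hI, mul_tx_t, if_pos (Finset.mem_insert_of_mem hk)]
  · rw [if_neg hk, Q1_tx]
    unfold Q1val
    dsimp only
    apply Finset.sum_congr rfl
    intro j hj
    by_cases hjk : j = k
    · subst hjk
      rw [if_pos (Finset.mem_insert_self j I)]
      by_cases hI : j ∈ I
      · simp [hI]
      · rw [if_neg hI, mul_tx_t, if_pos (Finset.mem_insert_self j I)]
    · by_cases hI : j ∈ I
      · rw [if_pos hI, if_pos (Finset.mem_insert_of_mem hI), map_zero, LinearMap.zero_apply]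
      · have hkij : k ∉ insert j I := by
          intro h
          rcases Finset.mem_insert.mp h with h | h
          · exact hjk h.symm
          · exact hk h
        rw [if_neg hI, if_neg (by simp [hjk, hI]), mul_tx_t, if_neg hkij, Finset.insert_comm]

lemma exch_mul_x (k : ℕ+) (u : R) :
    exch (mulR u (tx ∅ {k})) = mulR (exch u) (tx {k} ∅) := by
  have := ext_tx (f := exch ∘ₗ mulR.flip (tx ∅ {k}))
      (g := (mulR.flip (tx {k} ∅)) ∘ₗ exch) ?_ u
  · simpa using this
  intro I J
  simp only [LinearMap.comp_apply, LinearMap.flip_apply]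
  rw [mul_tx_x, exch_tx, mul_tx_t]
  by_cases hk : k ∈ J
  · rw [if_pos hk, if_pos hk, map_zero]
  · rw [if_neg hk, if_neg hk, exch_tx]

lemma exch_mul_t (k : ℕ+) (u : R) :
    exch (mulR u (tx {k} ∅)) = mulR (exch u) (tx ∅ {k}) := by
  have := ext_tx (f := exch ∘ₗ mulR.flip (tx {k} ∅))
      (g := (mulR.flip (tx ∅ {k})) ∘ₗ exch) ?_ u
  · simpa using this
  intro I J
  simp only [LinearMap.comp_apply, LinearMap.flip_apply]
  rw [mul_tx_t, exch_tx, mul_tx_x]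
  by_cases hk : k ∈ I
  · rw [if_pos hk, if_pos hk, map_zero]
  · rw [if_neg hk, if_neg hk, exch_tx]
lemma P_mul_t (k : ℕ+) (u : R) :
    PR (mulR u (tx {k} ∅)) = mulR (PR u) (tx {k} ∅) := by
  have := ext_tx (f := PR ∘ₗ mulR.flip (tx {k} ∅))
      (g := (mulR.flip (tx {k} ∅)) ∘ₗ PR) ?_ u
  · simpa using this
  intro I J
  simp only [LinearMap.comp_apply, LinearMap.flip_apply]
  rw [mul_tx_t, P_tx]
  unfold PvalR
  rw [map_sum, LinearMap.sum_apply]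
  by_cases hk : k ∈ I
  · rw [if_pos hk, map_zero]
    symm
    apply Finset.sum_eq_zero
    intro p hp
    by_cases h1 : p.1 ∈ I ∨ p.2 ∈ I
    · simp [h1]
    · rw [if_neg h1, mul_tx_t,
        if_pos (Finset.mem_insert_of_mem (Finset.mem_insert_of_mem hk))]
  · rw [if_neg hk, P_tx]
    unfold PvalR
    dsimp only
    apply Finset.sum_congr rfl
    intro p hp
    by_cases h1 : p.1 ∈ I ∨ p.2 ∈ I
    · rw [if_pos h1, map_zero, LinearMap.zero_apply,
        if_pos (by rcases h1 with h | h
                   · exact Or.inl (Finset.mem_insert_of_mem h)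
                   · exact Or.inr (Finset.mem_insert_of_mem h))]
    · by_cases h2 : p.1 = k ∨ p.2 = k
      · have hmem : p.1 ∈ insert k I ∨ p.2 ∈ insert k I := by
          rcases h2 with h | h
          · exact Or.inl (h ▸ Finset.mem_insert_self _ _)
          · exact Or.inr (h ▸ Finset.mem_insert_self _ _)
        have hmem2 : k ∈ insert p.1 (insert p.2 I) := by
          rcases h2 with h | h
          · exact h ▸ Finset.mem_insert_self _ _
          · exact Finset.mem_insert_of_mem (h ▸ Finset.mem_insert_self _ _)
        rw [if_pos hmem, if_neg h1, mul_tx_t, if_pos hmem2]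
      · have hnot1 : ¬(p.1 ∈ insert k I ∨ p.2 ∈ insert k I) := by
          simp only [Finset.mem_insert]
          tauto
        have hnot2 : k ∉ insert p.1 (insert p.2 I) := by
          simp only [Finset.mem_insert]
          rintro (h | h | h)
          · exact h2 (Or.inl h.symm)
          · exact h2 (Or.inr h.symm)
          · exact hk h
        rw [if_neg hnot1, if_neg h1, mul_tx_t, if_neg hnot2,
          Finset.insert_comm p.2 k, Finset.insert_comm p.1 k]
lemma P_mul_x (k : ℕ+) (u : R) :
    PR (mulR u (tx ∅ {k})) = mulR (PR u) (tx ∅ {k}) + mulR (Q1R u) (tx {k} ∅) := by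
  have := ext_tx (f := PR ∘ₗ mulR.flip (tx ∅ {k}))
      (g := (mulR.flip (tx ∅ {k})) ∘ₗ PR + (mulR.flip (tx {k} ∅)) ∘ₗ Q1R) ?_ u
  · simpa using this
  intro I J
  simp only [LinearMap.comp_apply, LinearMap.flip_apply, LinearMap.add_apply]
  rw [mul_tx_x, P_tx, Q1_tx]
  unfold PvalR Q1val
  dsimp only
  rw [map_sum, LinearMap.sum_apply, map_sum, LinearMap.sum_apply]
  have symmA : ∀ a b : ℕ+,
      (mulR (if a ∈ I ∨ b ∈ I then 0
        else tx (insert a (insert b I)) ((J.erase a).erase b))) (tx ∅ {k})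
      = (mulR (if b ∈ I ∨ a ∈ I then 0
        else tx (insert b (insert a I)) ((J.erase b).erase a))) (tx ∅ {k}) := by
    intro a b
    simp only [Finset.insert_comm a b, Finset.erase_right_comm,
      or_comm (a := a ∈ I) (b := b ∈ I)]
  -- evaluation of the B-terms
  have hBterm : ∀ j, j ∈ J → j ≠ k →
      (mulR (if j ∈ I then 0 else tx (insert j I) (J.erase j))) (tx {k} ∅)
      = if j ∈ I ∨ k ∈ I then 0 else tx (insert j (insert k I)) (J.erase j) := by
    intro j hj hjk
    by_cases hI : j ∈ I
    · simp [hI]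
    · rw [if_neg hI, mul_tx_t]
      by_cases hkI : k ∈ I
      · rw [if_pos (Finset.mem_insert_of_mem hkI), if_pos (Or.inr hkI)]
      · have : k ∉ insert j I := by
          intro h
          rcases Finset.mem_insert.mp h with h | h
          · exact hjk h.symm
          · exact hkI h
        rw [if_neg this, if_neg (by tauto), Finset.insert_comm k j]
  by_cases hk : k ∈ J
  · rw [if_pos hk, map_zero]
    have hsplit := sum_pairs_insert (J.erase k) k (Finset.notMem_erase k J)
      (fun p => (mulR (if p.1 ∈ I ∨ p.2 ∈ I then 0
        else tx (insert p.1 (insert p.2 I)) ((J.erase p.1).erase p.2))) (tx ∅ {k}))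
      (fun a b => symmA a b)
    rw [Finset.insert_erase hk] at hsplit
    rw [hsplit]
    have hz : ∀ p ∈ ((J.erase k) ×ˢ (J.erase k)).filter (fun p => p.1 < p.2),
        (mulR (if p.1 ∈ I ∨ p.2 ∈ I then 0
          else tx (insert p.1 (insert p.2 I)) ((J.erase p.1).erase p.2))) (tx ∅ {k}) = 0 := by
      intro p hp
      simp only [Finset.mem_filter, Finset.mem_product, Finset.mem_erase] at hp
      obtain ⟨⟨⟨h1k, h1J⟩, h2k, h2J⟩, _⟩ := hp
      by_cases h1 : p.1 ∈ I ∨ p.2 ∈ I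
      · simp [h1]
      · rw [if_neg h1, mul_tx_x,
          if_pos (Finset.mem_erase.mpr ⟨Ne.symm h2k, Finset.mem_erase.mpr ⟨Ne.symm h1k, hk⟩⟩)]
    rw [Finset.sum_eq_zero hz, zero_add]
    -- second sum = B-sum
    rw [← Finset.sum_erase_add J _ hk]
    have hBk : (mulR (if k ∈ I then 0 else tx (insert k I) (J.erase k))) (tx {k} ∅) = 0 := by
      by_cases hI : k ∈ I
      · simp [hI]
      · rw [if_neg hI, mul_tx_t, if_pos (Finset.mem_insert_self k I)]
    rw [hBk, add_zero]
    dsimp only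
    have hAB : ∀ j ∈ J.erase k,
        (mulR (if j ∈ I ∨ k ∈ I then 0
          else tx (insert j (insert k I)) ((J.erase j).erase k))) (tx ∅ {k})
        = (mulR (if j ∈ I then 0 else tx (insert j I) (J.erase j))) (tx {k} ∅) := by
      intro j hj
      have hjk : j ≠ k := (Finset.mem_erase.mp hj).1
      have hjJ : j ∈ J := (Finset.mem_erase.mp hj).2
      rw [hBterm j hjJ hjk]
      by_cases h1 : j ∈ I ∨ k ∈ I
      · simp [h1]
      · rw [if_neg h1, if_neg h1, mul_tx_x, if_neg (Finset.notMem_erase k _),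
          Finset.insert_erase (Finset.mem_erase.mpr ⟨Ne.symm hjk, hk⟩)]
    rw [Finset.sum_congr rfl hAB]
    exact (addSelf _).symm
  · rw [if_neg hk, P_tx]
    unfold PvalR
    dsimp only
    have hsplit := sum_pairs_insert J k hk
      (fun p => if p.1 ∈ I ∨ p.2 ∈ I then 0
        else tx (insert p.1 (insert p.2 I)) (((insert k J).erase p.1).erase p.2))
      (fun a b => by
        simp only [Finset.insert_comm a b, Finset.erase_right_comm,
          or_comm (a := a ∈ I) (b := b ∈ I)])
    rw [hsplit]
    dsimp only
    congr 1
    · apply Finset.sum_congr rfl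
      intro p hp
      simp only [Finset.mem_filter, Finset.mem_product] at hp
      obtain ⟨⟨h1J, h2J⟩, _⟩ := hp
      have h1k : k ≠ p.1 := by rintro rfl; exact hk h1J
      have h2k : k ≠ p.2 := by rintro rfl; exact hk h2J
      by_cases h1 : p.1 ∈ I ∨ p.2 ∈ I
      · simp [h1]
      · rw [if_neg h1, if_neg h1, mul_tx_x,
          if_neg (fun h => hk (Finset.mem_of_mem_erase (Finset.mem_of_mem_erase h))),
          Finset.erase_insert_of_ne h1k, Finset.erase_insert_of_ne h2k]
    · apply Finset.sum_congr rfl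
      intro j hj
      have hjk : j ≠ k := by rintro rfl; exact hk hj
      rw [hBterm j hj hjk, Finset.erase_insert_of_ne (Ne.symm hjk),
        Finset.erase_insert (fun h => hk (Finset.mem_of_mem_erase h))]
lemma two_zsmul_R (a : R) : (2 : ℤ) • a = 0 := by
  rw [two_zsmul]; exact addSelf a

/-- The core relations (i)-(iv) plus `P(Q₁ b) = 0` and `Q₁² b = 0`. -/
def CoreRel (b : R) : Prop :=
  Q1R b = Q1R (exch b) ∧
  Q1R (exch (Q1R b)) = b + exch b ∧
  PR (exch (Q1R b)) = Q1R b ∧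
  PR b = 0 ∧ PR (exch b) = 0 ∧
  PR (Q1R b) = 0 ∧ Q1R (Q1R b) = 0

lemma Q1_one : Q1R (tx ∅ ∅) = 0 := by
  rw [Q1_tx]; unfold Q1val; simp

lemma P_one : PR (tx ∅ ∅) = 0 := by
  rw [P_tx]; unfold PvalR; simp

lemma core_base : CoreRel (tx ∅ ∅) := by
  refine ⟨?_, ?_, ?_, ?_, ?_, ?_, ?_⟩ <;>
    simp [exch_tx, Q1_one, P_one, (addSelf (tx ∅ ∅)).symm]

lemma core_exch {b : R} (h : CoreRel b) : CoreRel (exch b) := by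
  obtain ⟨h1, h2, h3, h4, h5, h6, h7⟩ := h
  refine ⟨?_, ?_, ?_, ?_, ?_, ?_, ?_⟩
  · rw [exch_exch, ← h1]
  · rw [← h1, h2, exch_exch, add_comm]
  · rw [← h1, h3, h1]
  · exact h5
  · rw [exch_exch]; exact h4
  · rw [← h1]; exact h6
  · rw [← h1]; exact h7

lemma derive567 {b : R} (h : CoreRel b) (k : ℕ+) :
    Q1R (exch (Q1R (mulR b (tx ∅ {k})))) = Q1R (mulR b (tx ∅ {k})) ∧
    PR (Q1R (mulR b (tx ∅ {k}))) = 0 ∧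
    PR (exch (Q1R (mulR b (tx ∅ {k})))) = 0 ∧
    Q1R (Q1R (mulR b (tx ∅ {k}))) = 0 := by
  obtain ⟨h1, h2, h3, h4, h5, h6, h7⟩ := h
  have hc : Q1R (mulR b (tx ∅ {k})) = mulR (Q1R b) (tx ∅ {k}) + mulR b (tx {k} ∅) :=
    Q1_mul_x k b
  have hce : exch (Q1R (mulR b (tx ∅ {k})))
      = mulR (exch (Q1R b)) (tx {k} ∅) + mulR (exch b) (tx ∅ {k}) := by
    rw [hc, map_add, exch_mul_x, exch_mul_t]
  refine ⟨?_, ?_, ?_, ?_⟩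
  · rw [hce, map_add, Q1_mul_t, Q1_mul_x, h2, ← h1, hc, map_add, LinearMap.add_apply]
    abel_nf
    simp only [two_zsmul_R]
    abel
  · rw [hc, map_add, P_mul_x, P_mul_t, h6, h7, h4]
    simp
  · rw [hce, map_add, P_mul_t, P_mul_x, h3, h5, ← h1, map_zero, LinearMap.zero_apply]
    abel_nf
    simp only [two_zsmul_R]
  · rw [hc, map_add, Q1_mul_x, Q1_mul_t, h7, map_zero, LinearMap.zero_apply]
    abel_nf
    simp only [two_zsmul_R]

lemma core_step {b : R} (h : CoreRel b) (k m : ℕ+) :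
    CoreRel (mulR (Q1R (mulR b (tx ∅ {k}))) (tx ∅ {m})) := by
  obtain ⟨hv, hvi, hvii, hQc⟩ := derive567 h k
  set c := Q1R (mulR b (tx ∅ {k})) with hcdef
  have hQ1b' : Q1R (mulR c (tx ∅ {m})) = mulR c (tx {m} ∅) := by
    rw [Q1_mul_x, hQc, map_zero, LinearMap.zero_apply, zero_add]
  have hexchb' : exch (mulR c (tx ∅ {m})) = mulR (exch c) (tx {m} ∅) := exch_mul_x m c
  refine ⟨?_, ?_, ?_, ?_, ?_, ?_, ?_⟩
  · rw [hQ1b', hexchb', Q1_mul_t, hv]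
  · rw [hQ1b', exch_mul_t, Q1_mul_x, hv, hexchb']
  · rw [hQ1b', exch_mul_t, P_mul_x, hvii, hv, map_zero, LinearMap.zero_apply, zero_add]
  · rw [P_mul_x, hvi, hQc]
    simp
  · rw [hexchb', P_mul_t, hvii, map_zero, LinearMap.zero_apply]
  · rw [hQ1b', P_mul_t, hvi, map_zero, LinearMap.zero_apply]
  · rw [hQ1b', Q1_mul_t, hQc, map_zero, LinearMap.zero_apply]

lemma good (t : ℕ) : ∀ b ∈ B2 t, exch b ∈ B2 t ∧ CoreRel b := by
  induction t with
  | zero =>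
    intro b hb
    rw [Set.mem_singleton_iff.mp hb]
    exact ⟨by rw [exch_tx]; exact rfl, core_base⟩
  | succ t ih =>
    intro b' hb'
    simp only [B2, Set.mem_union, Set.mem_image] at hb'
    rcases hb' with ⟨b, hb, rfl⟩ | ⟨b, hb, rfl⟩
    · constructor
      · rw [show (xg (2 * t + 2) : R) = tx ∅ {(2 * t + 2).toPNat'} from rfl, exch_mul_x]
        exact Or.inr ⟨b, hb, rfl⟩
      · exact core_step (ih b hb).2 (2 * t + 1).toPNat' (2 * t + 2).toPNat'
    · have he : mulR (exch (Q1R (mulR b (xg (2 * t + 1))))) (tg (2 * t + 2))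
          = exch (mulR (Q1R (mulR b (xg (2 * t + 1)))) (xg (2 * t + 2))) :=
        (exch_mul_x (2 * t + 2).toPNat' _).symm
      constructor
      · rw [he, exch_exch]
        exact Or.inl ⟨b, hb, rfl⟩
      · rw [he]
        exact core_exch (core_step (ih b hb).2 (2 * t + 1).toPNat' (2 * t + 2).toPNat')

/-- relations satisfied by the recursive basis, Lemma 4.3.
`B_{[2t]}` is closed under the exchange map, and each `b ∈ B_{[2t]}` satisfies the
identities (i)–(vii). -/
theorem B_relations (t : ℕ) :
    (∀ b ∈ B2 t, exch b ∈ B2 t) ∧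
    ∀ b ∈ B2 t,
      Q1R b = Q1R (exch b) ∧
      Q1R (exch (Q1R b)) = b + exch b ∧
      PR (exch (Q1R b)) = Q1R b ∧
      (PR b = 0 ∧ PR (exch b) = 0) ∧
      Q1R (exch (Q1R (mulR b (xg (2 * t + 1))))) = Q1R (mulR b (xg (2 * t + 1))) ∧
      PR (Q1R (mulR b (xg (2 * t + 1)))) = 0 ∧
      PR (exch (Q1R (mulR b (xg (2 * t + 1))))) = 0 := by
  refine ⟨fun b hb => (good t b hb).1, fun b hb => ?_⟩
  obtain ⟨h1, h2, h3, h4, h5, h6, h7⟩ := (good t b hb).2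
  obtain ⟨d1, d2, d3, -⟩ :=
    derive567 (⟨h1, h2, h3, h4, h5, h6, h7⟩ : CoreRel b) ((2 * t + 1).toPNat')
  exact ⟨h1, h2, h3, ⟨h4, h5⟩, d1, d2, d3⟩

end Tmf

end
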